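/- Let B be freely generated by A_1, A_2, A_3, A_4 and f a function on B_13 ∪ B_23 ∪ B_14 ∪ B_24 restricting to normalized measures on each of these subalgebras (B_ij generated by {A_i, A_j}). Then f extends to a normalized measure on B if and only if there exist normalized measures f^{123} on B_{123} and f^{124} on B_{124} extending the respective restrictions of f and agreeing on the subalgebra B_12 generated by {A_1, A_2}. -/

import Mathlib

def IsNormMeasure {B : Type*} [BooleanAlgebra B] (m : B → ℝ) : Prop :=
  (∀ x, 0 ≤ m x) ∧ (∀ x y : B, x ⊓ y = ⊥ → m (x ⊔ y) = m x + m y) ∧ m ⊤ = 1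

def IsMeasureOn {B : Type*} [BooleanAlgebra B] (m : B → ℝ) (S : Set B) : Prop :=
  (∀ x ∈ S, 0 ≤ m x) ∧
  (∀ x ∈ S, ∀ y ∈ S, x ⊓ y = ⊥ → m (x ⊔ y) = m x + m y) ∧ m ⊤ = 1

def subalgClosure {B : Type*} [BooleanAlgebra B] (G : Set B) : Set B :=
  ⋂₀ {S : Set B | G ⊆ S ∧ (⊤ : B) ∈ S ∧ (⊥ : B) ∈ S ∧ (∀ x ∈ S, xᶜ ∈ S) ∧
      (∀ x ∈ S, ∀ y ∈ S, x ⊓ y ∈ S) ∧ (∀ x ∈ S, ∀ y ∈ S, x ⊔ y ∈ S)}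

def IsFreelyGeneratedBy {n : ℕ} {B : Type*} [BooleanAlgebra B] (A : Fin n → B) : Prop :=
  ∀ (C : Type) [BooleanAlgebra C], ∀ g : Fin n → C,
    ∃! φ : BoundedLatticeHom B C, ∀ i, φ (A i) = g i

namespace Fine9

open Finset

variable {B : Type*} [BooleanAlgebra B]

/-! ### subalgClosure lemmas -/

lemma mem_closure_gen {G : Set B} {x : B} (h : x ∈ G) : x ∈ subalgClosure G :=
  fun _ hS => hS.1 h

lemma top_mem_closure {G : Set B} : (⊤ : B) ∈ subalgClosure G :=
  fun _ hS => hS.2.1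

lemma bot_mem_closure {G : Set B} : (⊥ : B) ∈ subalgClosure G :=
  fun _ hS => hS.2.2.1

lemma compl_mem_closure {G : Set B} {x : B} (hx : x ∈ subalgClosure G) :
    xᶜ ∈ subalgClosure G :=
  fun S hS => hS.2.2.2.1 x (hx S hS)

lemma inf_mem_closure {G : Set B} {x y : B} (hx : x ∈ subalgClosure G)
    (hy : y ∈ subalgClosure G) : x ⊓ y ∈ subalgClosure G :=
  fun S hS => hS.2.2.2.2.1 x (hx S hS) y (hy S hS)

lemma sup_mem_closure {G : Set B} {x y : B} (hx : x ∈ subalgClosure G)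
    (hy : y ∈ subalgClosure G) : x ⊔ y ∈ subalgClosure G :=
  fun S hS => hS.2.2.2.2.2 x (hx S hS) y (hy S hS)

lemma closure_mono {G G' : Set B} (h : G ⊆ G') :
    subalgClosure G ⊆ subalgClosure G' := by
  intro x hx S hS
  exact hx S ⟨h.trans hS.1, hS.2⟩

/-! ### literals and lattice helpers -/

def lit (a : B) (s : Bool) : B := cond s a aᶜ

@[simp] lemma lit_true (a : B) : lit a true = a := rfl
@[simp] lemma lit_false (a : B) : lit a false = aᶜ := rfl

lemma lit_mem_closure {G : Set B} {a : B} (ha : a ∈ subalgClosure G) (s : Bool) :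
    lit a s ∈ subalgClosure G := by
  cases s
  · exact compl_mem_closure ha
  · exact ha

lemma lit_inf_ne {a : B} {s t : Bool} (h : s ≠ t) : lit a s ⊓ lit a t = ⊥ := by
  cases s <;> cases t <;> simp_all

lemma last_split (x y : B) : (x ⊓ y) ⊔ (x ⊓ yᶜ) = x := by
  rw [← inf_sup_left]; simp

lemma last_disj (x y : B) : (x ⊓ y) ⊓ (x ⊓ yᶜ) = ⊥ := by
  have h : (x ⊓ y) ⊓ (x ⊓ yᶜ) ≤ y ⊓ yᶜ := inf_le_inf inf_le_right inf_le_right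
  simpa using le_bot_iff.mp (by simpa using h)

lemma mid_split (x y z : B) : ((x ⊓ y) ⊓ z) ⊔ ((x ⊓ yᶜ) ⊓ z) = x ⊓ z := by
  rw [← inf_sup_right, last_split]

lemma mid_disj (x y z : B) : ((x ⊓ y) ⊓ z) ⊓ ((x ⊓ yᶜ) ⊓ z) = ⊥ := by
  have h : ((x ⊓ y) ⊓ z) ⊓ ((x ⊓ yᶜ) ⊓ z) ≤ y ⊓ yᶜ :=
    inf_le_inf (inf_le_left.trans inf_le_right) (inf_le_left.trans inf_le_right)
  simpa using le_bot_iff.mp (by simpa using h)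

lemma fst_split (x y z : B) : ((x ⊓ y) ⊓ z) ⊔ ((xᶜ ⊓ y) ⊓ z) = y ⊓ z := by
  rw [← inf_sup_right, ← inf_sup_right]
  simp

lemma fst_disj (x y z : B) : ((x ⊓ y) ⊓ z) ⊓ ((xᶜ ⊓ y) ⊓ z) = ⊥ := by
  have h : ((x ⊓ y) ⊓ z) ⊓ ((xᶜ ⊓ y) ⊓ z) ≤ x ⊓ xᶜ :=
    inf_le_inf (inf_le_left.trans inf_le_left) (inf_le_left.trans inf_le_left)
  simpa using le_bot_iff.mp (by simpa using h)

/-! ### block decomposition of pair subalgebras -/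

def blk (a b : B) (q : Bool × Bool) : B := lit a q.1 ⊓ lit b q.2

lemma blk_disj (a b : B) : ∀ q q' : Bool × Bool, q ≠ q' →
    blk a b q ⊓ blk a b q' = ⊥ := by
  intro q q' h
  by_cases h1 : q.1 = q'.1
  · have h2 : q.2 ≠ q'.2 := fun h2 => h (Prod.ext h1 h2)
    have hle : blk a b q ⊓ blk a b q' ≤ lit b q.2 ⊓ lit b q'.2 :=
      inf_le_inf inf_le_right inf_le_right
    rw [lit_inf_ne h2] at hle
    exact le_bot_iff.mp hle
  · have hle : blk a b q ⊓ blk a b q' ≤ lit a q.1 ⊓ lit a q'.1 :=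
      inf_le_inf inf_le_left inf_le_left
    rw [lit_inf_ne h1] at hle
    exact le_bot_iff.mp hle

lemma sup_inf_sup {ι : Type*} [DecidableEq ι] (u : ι → B)
    (hd : ∀ i j, i ≠ j → u i ⊓ u j = ⊥) (P Q : Finset ι) :
    P.sup u ⊓ Q.sup u = (P ∩ Q).sup u := by
  apply le_antisymm
  · rw [Finset.sup_inf_distrib_right]
    apply Finset.sup_le
    intro i hi
    rw [Finset.sup_inf_distrib_left]
    apply Finset.sup_le
    intro j hj
    by_cases hij : i = j
    · subst hij
      simpa using Finset.le_sup (f := u) (Finset.mem_inter.mpr ⟨hi, hj⟩)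
    · rw [hd i j hij]
      exact bot_le
  · exact le_inf (Finset.sup_mono Finset.inter_subset_left)
      (Finset.sup_mono Finset.inter_subset_right)

lemma univ_sup_blk (a b : B) :
    (Finset.univ : Finset (Bool × Bool)).sup (blk a b) = ⊤ := by
  rw [show (Finset.univ : Finset (Bool × Bool)) =
      {(true,true),(true,false),(false,true),(false,false)} from by decide]
  simp only [Finset.sup_insert, Finset.sup_singleton, blk, lit_true, lit_false]
  rw [← sup_assoc, last_split, last_split]
  simp

lemma pair_rep (a b : B) {x : B} (hx : x ∈ subalgClosure {a, b}) :
    ∃ P : Finset (Bool × Bool), x = P.sup (blk a b) := by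
  refine hx {y | ∃ P : Finset (Bool × Bool), y = P.sup (blk a b)} ⟨?_, ?_, ?_, ?_, ?_, ?_⟩
  · intro y hy
    rcases hy with hy | hy
    · exact ⟨{(true,true),(true,false)}, by
        subst hy
        simp only [Finset.sup_insert, Finset.sup_singleton, blk, lit_true, lit_false]
        rw [last_split]⟩
    · exact ⟨{(true,true),(false,true)}, by
        rw [Set.mem_singleton_iff] at hy
        subst hy
        simp only [Finset.sup_insert, Finset.sup_singleton, blk, lit_true, lit_false]
        rw [← inf_sup_right]
        simp⟩
  · exact ⟨Finset.univ, (univ_sup_blk a b).symm⟩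
  · exact ⟨∅, by simp⟩
  · rintro y ⟨P, rfl⟩
    refine ⟨Pᶜ, ?_⟩
    have hc : IsCompl (P.sup (blk a b)) (Pᶜ.sup (blk a b)) := by
      constructor
      · rw [disjoint_iff, sup_inf_sup (blk a b) (blk_disj a b)]
        simp
      · rw [codisjoint_iff, ← Finset.sup_union, Finset.union_compl, univ_sup_blk]
    exact hc.compl_eq
  · rintro y ⟨P, rfl⟩ z ⟨Q, rfl⟩
    exact ⟨P ∩ Q, (sup_inf_sup (blk a b) (blk_disj a b) P Q)⟩
  · rintro y ⟨P, rfl⟩ z ⟨Q, rfl⟩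
    exact ⟨P ∪ Q, (Finset.sup_union).symm⟩

/-! ### finite additivity of measures -/

lemma sup_mem_of_mem {S : Set B} (hbot : (⊥ : B) ∈ S)
    (hsup : ∀ x ∈ S, ∀ y ∈ S, x ⊔ y ∈ S) {ι : Type*} (u : ι → B) (P : Finset ι)
    (hu : ∀ i ∈ P, u i ∈ S) : P.sup u ∈ S :=
  Finset.sup_induction hbot (fun x hx y hy => hsup x hx y hy) hu

lemma meas_bot_eq_zero {m : B → ℝ} {S : Set B} (hm : IsMeasureOn m S)
    (hbot : (⊥ : B) ∈ S) : m ⊥ = 0 := by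
  have := hm.2.1 ⊥ hbot ⊥ hbot (by simp)
  simp at this
  linarith

lemma meas_sup_sum {m : B → ℝ} {S : Set B} (hm : IsMeasureOn m S)
    (hbot : (⊥ : B) ∈ S) (hsup : ∀ x ∈ S, ∀ y ∈ S, x ⊔ y ∈ S)
    {ι : Type*} [DecidableEq ι] (u : ι → B)
    (hd : ∀ i j, i ≠ j → u i ⊓ u j = ⊥) (P : Finset ι)
    (hu : ∀ i ∈ P, u i ∈ S) :
    m (P.sup u) = ∑ i ∈ P, m (u i) := by
  induction P using Finset.induction_on with
  | empty => simpa using meas_bot_eq_zero hm hbot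
  | @insert a P ha ih =>
    have hu' : ∀ i ∈ P, u i ∈ S := fun i hi => hu i (Finset.mem_insert_of_mem hi)
    have hsupmem : P.sup u ∈ S := sup_mem_of_mem hbot hsup u P hu'
    have hdisj : u a ⊓ P.sup u = ⊥ := by
      rw [Finset.sup_inf_distrib_left, eq_bot_iff]
      apply Finset.sup_le
      intro i hi
      rw [hd a i (fun h => ha (h ▸ hi))]
    rw [Finset.sup_insert, hm.2.1 (u a) (hu a (Finset.mem_insert_self a P))
      (P.sup u) hsupmem hdisj, ih hu', Finset.sum_insert ha]

/-! ### concrete side -/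

abbrev V := Fin 4 → Bool

def mk4 (a b c d : Bool) : V := fun i => match i with | 0 => a | 1 => b | 2 => c | 3 => d

@[simp] lemma mk4_0 (a b c d : Bool) : mk4 a b c d 0 = a := rfl
@[simp] lemma mk4_1 (a b c d : Bool) : mk4 a b c d 1 = b := rfl
@[simp] lemma mk4_2 (a b c d : Bool) : mk4 a b c d 2 = c := rfl
@[simp] lemma mk4_3 (a b c d : Bool) : mk4 a b c d 3 = d := rfl

def e4 : Bool × Bool × Bool × Bool ≃ V where
  toFun q := mk4 q.1 q.2.1 q.2.2.1 q.2.2.2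
  invFun v := (v 0, v 1, v 2, v 3)
  left_inv q := rfl
  right_inv v := by funext i; fin_cases i <;> rfl

lemma sum_V (F : V → ℝ) : ∑ v, F v = ∑ a, ∑ b, ∑ c, ∑ d, F (mk4 a b c d) := by
  rw [← Equiv.sum_comp e4 F]
  simp [Fintype.sum_prod_type, e4]
  rfl

def clit (i : Fin 4) (s : Bool) : Finset V := Finset.univ.filter (fun v => v i = s)

lemma clit_compl : ∀ i : Fin 4, (clit i true)ᶜ = clit i false := by decide

/-- additivity of a sum-measure over a disjoint finite union in `Finset V` -/
lemma nu_finsum (p : V → ℝ) {ι : Type} [DecidableEq ι] (cb : ι → Finset V)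
    (hd : ∀ i j, i ≠ j → cb i ∩ cb j = ∅) (P : Finset ι) :
    ∑ v ∈ P.sup cb, p v = ∑ q ∈ P, ∑ v ∈ cb q, p v := by
  induction P using Finset.induction_on with
  | empty => simp
  | @insert a P ha ih =>
    have hdisj : Disjoint (cb a) (P.sup cb) := by
      rw [Finset.disjoint_sup_right]
      intro i hi
      rw [Finset.disjoint_iff_inter_eq_empty]
      exact hd a i (fun h => ha (h ▸ hi))
    rw [Finset.sup_insert, Finset.sup_eq_union, Finset.sum_union hdisj, ih,
      Finset.sum_insert ha]

section Construction

variable (g h : B → ℝ) (A : Fin 4 → B)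

def dd (a b : Bool) : ℝ := g (lit (A 0) a ⊓ lit (A 1) b)
def ga (a b c : Bool) : ℝ := g (lit (A 0) a ⊓ lit (A 1) b ⊓ lit (A 2) c)
def hb (a b d : Bool) : ℝ := h (lit (A 0) a ⊓ lit (A 1) b ⊓ lit (A 3) d)

noncomputable def pf (v : V) : ℝ :=
  if dd g A (v 0) (v 1) = 0 then 0
  else ga g A (v 0) (v 1) (v 2) * hb h A (v 0) (v 1) (v 3) / dd g A (v 0) (v 1)

variable {g h A}
variable (hg : IsMeasureOn g (subalgClosure {A 0, A 1, A 2}))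
variable (hh : IsMeasureOn h (subalgClosure {A 0, A 1, A 3}))
variable (hgh : ∀ x ∈ subalgClosure {A 0, A 1}, g x = h x)

-- memberships
lemma memA0_012 : A 0 ∈ subalgClosure {A 0, A 1, A 2} :=
  mem_closure_gen (Set.mem_insert _ _)
lemma memA1_012 : A 1 ∈ subalgClosure {A 0, A 1, A 2} :=
  mem_closure_gen (Set.mem_insert_of_mem _ (Set.mem_insert _ _))
lemma memA2_012 : A 2 ∈ subalgClosure {A 0, A 1, A 2} :=
  mem_closure_gen (Set.mem_insert_of_mem _ (Set.mem_insert_of_mem _ rfl))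
lemma memA0_013 : A 0 ∈ subalgClosure {A 0, A 1, A 3} :=
  mem_closure_gen (Set.mem_insert _ _)
lemma memA1_013 : A 1 ∈ subalgClosure {A 0, A 1, A 3} :=
  mem_closure_gen (Set.mem_insert_of_mem _ (Set.mem_insert _ _))
lemma memA3_013 : A 3 ∈ subalgClosure {A 0, A 1, A 3} :=
  mem_closure_gen (Set.mem_insert_of_mem _ (Set.mem_insert_of_mem _ rfl))

lemma mem01_012 (a b : Bool) :
    lit (A 0) a ⊓ lit (A 1) b ∈ subalgClosure {A 0, A 1, A 2} :=
  inf_mem_closure (lit_mem_closure memA0_012 a) (lit_mem_closure memA1_012 b)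
lemma mem012 (a b c : Bool) :
    lit (A 0) a ⊓ lit (A 1) b ⊓ lit (A 2) c ∈ subalgClosure {A 0, A 1, A 2} :=
  inf_mem_closure (mem01_012 a b) (lit_mem_closure memA2_012 c)
lemma mem01_013 (a b : Bool) :
    lit (A 0) a ⊓ lit (A 1) b ∈ subalgClosure {A 0, A 1, A 3} :=
  inf_mem_closure (lit_mem_closure memA0_013 a) (lit_mem_closure memA1_013 b)
lemma mem013 (a b d : Bool) :
    lit (A 0) a ⊓ lit (A 1) b ⊓ lit (A 3) d ∈ subalgClosure {A 0, A 1, A 3} :=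
  inf_mem_closure (mem01_013 a b) (lit_mem_closure memA3_013 d)
lemma mem01_01 (a b : Bool) :
    lit (A 0) a ⊓ lit (A 1) b ∈ subalgClosure {A 0, A 1} :=
  inf_mem_closure (lit_mem_closure (mem_closure_gen (Set.mem_insert _ _)) a)
    (lit_mem_closure (mem_closure_gen (Set.mem_insert_of_mem _ (Set.mem_singleton _))) b)

include hg in
lemma ga_nonneg (a b c : Bool) : 0 ≤ ga g A a b c := hg.1 _ (mem012 a b c)
include hh in
lemma hb_nonneg (a b d : Bool) : 0 ≤ hb h A a b d := hh.1 _ (mem013 a b d)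
include hg in
lemma dd_nonneg (a b : Bool) : 0 ≤ dd g A a b := hg.1 _ (mem01_012 a b)

include hg in
lemma F1 (a b : Bool) : dd g A a b = ga g A a b true + ga g A a b false := by
  have := hg.2.1 _ (mem012 a b true) _ (mem012 a b false)
    (by simpa using last_disj (lit (A 0) a ⊓ lit (A 1) b) (A 2))
  rw [show (lit (A 0) a ⊓ lit (A 1) b ⊓ lit (A 2) true) ⊔
      (lit (A 0) a ⊓ lit (A 1) b ⊓ lit (A 2) false) = lit (A 0) a ⊓ lit (A 1) b from by
    simpa using last_split (lit (A 0) a ⊓ lit (A 1) b) (A 2)] at this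
  exact this

include hg hh hgh in
lemma F2 (a b : Bool) : dd g A a b = hb h A a b true + hb h A a b false := by
  have := hh.2.1 _ (mem013 a b true) _ (mem013 a b false)
    (by simpa using last_disj (lit (A 0) a ⊓ lit (A 1) b) (A 3))
  rw [show (lit (A 0) a ⊓ lit (A 1) b ⊓ lit (A 3) true) ⊔
      (lit (A 0) a ⊓ lit (A 1) b ⊓ lit (A 3) false) = lit (A 0) a ⊓ lit (A 1) b from by
    simpa using last_split (lit (A 0) a ⊓ lit (A 1) b) (A 3)] at this
  rw [dd, hgh _ (mem01_01 a b)]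
  exact this

include hg in
lemma ga_zero {a b : Bool} (h0 : dd g A a b = 0) (c : Bool) : ga g A a b c = 0 := by
  have h1 := F1 hg a b
  have h2 := ga_nonneg hg a b true
  have h3 := ga_nonneg hg a b false
  cases c <;> linarith

include hg hh hgh in
lemma hb_zero {a b : Bool} (h0 : dd g A a b = 0) (d : Bool) : hb h A a b d = 0 := by
  have h1 := F2 hg hh hgh a b
  have h2 := hb_nonneg hh a b true
  have h3 := hb_nonneg hh a b false
  cases d <;> linarith

include hg in
lemma F4 : dd g A true true + dd g A true false + (dd g A false true + dd g A false false) = 1 := by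
  have htop : g ⊤ = 1 := hg.2.2
  have h0 : ∀ a : Bool, g (lit (A 0) a) = dd g A a true + dd g A a false := by
    intro a
    have := hg.2.1 _ (mem01_012 a true) _ (mem01_012 a false)
      (by simpa using last_disj (lit (A 0) a) (A 1))
    rw [show (lit (A 0) a ⊓ lit (A 1) true) ⊔ (lit (A 0) a ⊓ lit (A 1) false)
        = lit (A 0) a from by simpa using last_split (lit (A 0) a) (A 1)] at this
    exact this
  have h1 : g ⊤ = g (lit (A 0) true) + g (lit (A 0) false) := by
    have := hg.2.1 _ (lit_mem_closure memA0_012 true) _ (lit_mem_closure memA0_012 false)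
      (by simp)
    simpa using this
  rw [h1, h0, h0] at htop
  linarith

include hg hh hgh in
lemma colsum (a b c : Bool) :
    pf g h A (mk4 a b c true) + pf g h A (mk4 a b c false) = ga g A a b c := by
  show (if dd g A a b = 0 then 0 else ga g A a b c * hb h A a b true / dd g A a b)
    + (if dd g A a b = 0 then 0 else ga g A a b c * hb h A a b false / dd g A a b)
    = ga g A a b c
  by_cases h0 : dd g A a b = 0
  · rw [if_pos h0, if_pos h0, ga_zero hg h0]
    norm_num
  · rw [if_neg h0, if_neg h0, ← add_div, ← mul_add, ← F2 hg hh hgh,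
      mul_div_assoc, div_self h0, mul_one]

include hg hh hgh in
lemma rowsum (a b d : Bool) :
    pf g h A (mk4 a b true d) + pf g h A (mk4 a b false d) = hb h A a b d := by
  show (if dd g A a b = 0 then 0 else ga g A a b true * hb h A a b d / dd g A a b)
    + (if dd g A a b = 0 then 0 else ga g A a b false * hb h A a b d / dd g A a b)
    = hb h A a b d
  by_cases h0 : dd g A a b = 0
  · rw [if_pos h0, if_pos h0, hb_zero hg hh hgh h0]
    norm_num
  · rw [if_neg h0, if_neg h0, ← add_div, ← add_mul, ← F1 hg,
      mul_comm, mul_div_assoc, div_self h0, mul_one]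

include hg hh hgh in
lemma Rblk02 (s t : Bool) :
    (pf g h A (mk4 s true t true) + pf g h A (mk4 s true t false))
      + (pf g h A (mk4 s false t true) + pf g h A (mk4 s false t false))
      = g (lit (A 0) s ⊓ lit (A 2) t) := by
  rw [colsum hg hh hgh, colsum hg hh hgh]
  have := hg.2.1 _ (mem012 s true t) _ (mem012 s false t)
    (by simpa using mid_disj (lit (A 0) s) (A 1) (lit (A 2) t))
  rw [show (lit (A 0) s ⊓ lit (A 1) true ⊓ lit (A 2) t) ⊔
      (lit (A 0) s ⊓ lit (A 1) false ⊓ lit (A 2) t) = lit (A 0) s ⊓ lit (A 2) t from by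
    simpa using mid_split (lit (A 0) s) (A 1) (lit (A 2) t)] at this
  exact this.symm

include hg hh hgh in
lemma Rblk12 (s t : Bool) :
    (pf g h A (mk4 true s t true) + pf g h A (mk4 true s t false))
      + (pf g h A (mk4 false s t true) + pf g h A (mk4 false s t false))
      = g (lit (A 1) s ⊓ lit (A 2) t) := by
  rw [colsum hg hh hgh, colsum hg hh hgh]
  have := hg.2.1 _ (mem012 true s t) _ (mem012 false s t)
    (by simpa using fst_disj (A 0) (lit (A 1) s) (lit (A 2) t))
  rw [show (lit (A 0) true ⊓ lit (A 1) s ⊓ lit (A 2) t) ⊔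
      (lit (A 0) false ⊓ lit (A 1) s ⊓ lit (A 2) t) = lit (A 1) s ⊓ lit (A 2) t from by
    simpa using fst_split (A 0) (lit (A 1) s) (lit (A 2) t)] at this
  exact this.symm

include hg hh hgh in
lemma Rblk03 (s t : Bool) :
    (pf g h A (mk4 s true true t) + pf g h A (mk4 s true false t))
      + (pf g h A (mk4 s false true t) + pf g h A (mk4 s false false t))
      = h (lit (A 0) s ⊓ lit (A 3) t) := by
  rw [rowsum hg hh hgh, rowsum hg hh hgh]
  have := hh.2.1 _ (mem013 s true t) _ (mem013 s false t)
    (by simpa using mid_disj (lit (A 0) s) (A 1) (lit (A 3) t))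
  rw [show (lit (A 0) s ⊓ lit (A 1) true ⊓ lit (A 3) t) ⊔
      (lit (A 0) s ⊓ lit (A 1) false ⊓ lit (A 3) t) = lit (A 0) s ⊓ lit (A 3) t from by
    simpa using mid_split (lit (A 0) s) (A 1) (lit (A 3) t)] at this
  exact this.symm

include hg hh hgh in
lemma Rblk13 (s t : Bool) :
    (pf g h A (mk4 true s true t) + pf g h A (mk4 true s false t))
      + (pf g h A (mk4 false s true t) + pf g h A (mk4 false s false t))
      = h (lit (A 1) s ⊓ lit (A 3) t) := by
  rw [rowsum hg hh hgh, rowsum hg hh hgh]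
  have := hh.2.1 _ (mem013 true s t) _ (mem013 false s t)
    (by simpa using fst_disj (A 0) (lit (A 1) s) (lit (A 3) t))
  rw [show (lit (A 0) true ⊓ lit (A 1) s ⊓ lit (A 3) t) ⊔
      (lit (A 0) false ⊓ lit (A 1) s ⊓ lit (A 3) t) = lit (A 1) s ⊓ lit (A 3) t from by
    simpa using fst_split (A 0) (lit (A 1) s) (lit (A 3) t)] at this
  exact this.symm

include hg hh hgh in
lemma Rblk01 (a b : Bool) :
    (pf g h A (mk4 a b true true) + pf g h A (mk4 a b true false))
      + (pf g h A (mk4 a b false true) + pf g h A (mk4 a b false false))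
      = dd g A a b := by
  rw [colsum hg hh hgh, colsum hg hh hgh, ← F1 hg]

include hg hh hgh in
lemma pf_nonneg (v : V) : 0 ≤ pf g h A v := by
  rw [pf]
  split
  · exact le_refl 0
  · exact div_nonneg (mul_nonneg (ga_nonneg hg _ _ _) (hb_nonneg hh _ _ _))
      (dd_nonneg hg _ _)

include hg hh hgh in
lemma Rtot : ∑ v, pf g h A v = 1 := by
  rw [sum_V]
  simp only [Fintype.sum_bool]
  have h1 := Rblk01 hg hh hgh true true
  have h2 := Rblk01 hg hh hgh true false
  have h3 := Rblk01 hg hh hgh false true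
  have h4 := Rblk01 hg hh hgh false false
  have h5 := F4 hg
  linarith

include hg hh hgh in
lemma pf_nonneg' (v : V) : 0 ≤ pf g h A v := pf_nonneg hg hh hgh v

include hg hh hgh in
lemma nu_blk02 (s t : Bool) :
    ∑ v ∈ clit 0 s ⊓ clit 2 t, pf g h A v = g (lit (A 0) s ⊓ lit (A 2) t) := by
  have hset : clit 0 s ⊓ clit 2 t = Finset.univ.filter (fun v => v 0 = s ∧ v 2 = t) := by
    rw [Finset.inf_eq_inter]; ext v; simp [clit]
  rw [hset, Finset.sum_filter, sum_V]
  have r1 := Rblk02 hg hh hgh true true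
  have r2 := Rblk02 hg hh hgh true false
  have r3 := Rblk02 hg hh hgh false true
  have r4 := Rblk02 hg hh hgh false false
  simp only [lit_true, lit_false] at r1 r2 r3 r4
  cases s <;> cases t <;>
  · simp only [Fintype.sum_bool, mk4_0, mk4_2]
    norm_num
    linarith [r1, r2, r3, r4]

include hg hh hgh in
lemma nu_blk12 (s t : Bool) :
    ∑ v ∈ clit 1 s ⊓ clit 2 t, pf g h A v = g (lit (A 1) s ⊓ lit (A 2) t) := by
  have hset : clit 1 s ⊓ clit 2 t = Finset.univ.filter (fun v => v 1 = s ∧ v 2 = t) := by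
    rw [Finset.inf_eq_inter]; ext v; simp [clit]
  rw [hset, Finset.sum_filter, sum_V]
  have r1 := Rblk12 hg hh hgh true true
  have r2 := Rblk12 hg hh hgh true false
  have r3 := Rblk12 hg hh hgh false true
  have r4 := Rblk12 hg hh hgh false false
  simp only [lit_true, lit_false] at r1 r2 r3 r4
  cases s <;> cases t <;>
  · simp only [Fintype.sum_bool, mk4_1, mk4_2]
    norm_num
    linarith [r1, r2, r3, r4]

include hg hh hgh in
lemma nu_blk03 (s t : Bool) :
    ∑ v ∈ clit 0 s ⊓ clit 3 t, pf g h A v = h (lit (A 0) s ⊓ lit (A 3) t) := by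
  have hset : clit 0 s ⊓ clit 3 t = Finset.univ.filter (fun v => v 0 = s ∧ v 3 = t) := by
    rw [Finset.inf_eq_inter]; ext v; simp [clit]
  rw [hset, Finset.sum_filter, sum_V]
  have r1 := Rblk03 hg hh hgh true true
  have r2 := Rblk03 hg hh hgh true false
  have r3 := Rblk03 hg hh hgh false true
  have r4 := Rblk03 hg hh hgh false false
  simp only [lit_true, lit_false] at r1 r2 r3 r4
  cases s <;> cases t <;>
  · simp only [Fintype.sum_bool, mk4_0, mk4_3]
    norm_num
    linarith [r1, r2, r3, r4]

include hg hh hgh in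
lemma nu_blk13 (s t : Bool) :
    ∑ v ∈ clit 1 s ⊓ clit 3 t, pf g h A v = h (lit (A 1) s ⊓ lit (A 3) t) := by
  have hset : clit 1 s ⊓ clit 3 t = Finset.univ.filter (fun v => v 1 = s ∧ v 3 = t) := by
    rw [Finset.inf_eq_inter]; ext v; simp [clit]
  rw [hset, Finset.sum_filter, sum_V]
  have r1 := Rblk13 hg hh hgh true true
  have r2 := Rblk13 hg hh hgh true false
  have r3 := Rblk13 hg hh hgh false true
  have r4 := Rblk13 hg hh hgh false false
  simp only [lit_true, lit_false] at r1 r2 r3 r4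
  cases s <;> cases t <;>
  · simp only [Fintype.sum_bool, mk4_1, mk4_3]
    norm_num
    linarith [r1, r2, r3, r4]

end Construction

end Fine9

open Fine9 in
theorem stmt9 (B : Type*) [BooleanAlgebra B] (A : Fin 4 → B)
    (hA : IsFreelyGeneratedBy A) (f : B → ℝ)
    (h13 : IsMeasureOn f (subalgClosure {A 0, A 2}))
    (h23 : IsMeasureOn f (subalgClosure {A 1, A 2}))
    (h14 : IsMeasureOn f (subalgClosure {A 0, A 3}))
    (h24 : IsMeasureOn f (subalgClosure {A 1, A 3})) :
    (∃ μ : B → ℝ, IsNormMeasure μ ∧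
        ∀ x ∈ subalgClosure {A 0, A 2} ∪ subalgClosure {A 1, A 2} ∪
            subalgClosure {A 0, A 3} ∪ subalgClosure {A 1, A 3}, μ x = f x) ↔
    (∃ g h : B → ℝ,
        IsMeasureOn g (subalgClosure {A 0, A 1, A 2}) ∧
        IsMeasureOn h (subalgClosure {A 0, A 1, A 3}) ∧
        (∀ x ∈ subalgClosure {A 0, A 2} ∪ subalgClosure {A 1, A 2}, g x = f x) ∧
        (∀ x ∈ subalgClosure {A 0, A 3} ∪ subalgClosure {A 1, A 3}, h x = f x) ∧
        (∀ x ∈ subalgClosure {A 0, A 1}, g x = h x)) := by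
  constructor
  · rintro ⟨μ, hμ, hext⟩
    refine ⟨μ, μ, ⟨fun x _ => hμ.1 x, fun x _ y _ hxy => hμ.2.1 x y hxy, hμ.2.2⟩,
      ⟨fun x _ => hμ.1 x, fun x _ y _ hxy => hμ.2.1 x y hxy, hμ.2.2⟩, ?_, ?_, fun x _ => rfl⟩
    · intro x hx
      exact hext x (Or.inl (Or.inl hx))
    · intro x hx
      rcases hx with hx | hx
      · exact hext x (Or.inl (Or.inr hx))
      · exact hext x (Or.inr hx)
  · rintro ⟨g, h, hg, hh, hgf, hhf, hgh⟩
    obtain ⟨φ, hφ, -⟩ := hA (Finset V) (fun i => clit i true)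
    have hlit : ∀ (i : Fin 4) (s : Bool), φ (lit (A i) s) = clit i s := by
      intro i s
      cases s
      · rw [lit_false, map_compl' φ, hφ i, clit_compl i]
      · rw [lit_true]; exact hφ i
    refine ⟨fun x => ∑ v ∈ φ x, pf g h A v, ⟨?_, ?_, ?_⟩, ?_⟩
    · exact fun x => Finset.sum_nonneg fun v _ => pf_nonneg hg hh hgh v
    · intro x y hxy
      dsimp only
      have hdisj : Disjoint (φ x) (φ y) := by
        rw [Finset.disjoint_iff_inter_eq_empty, ← Finset.inf_eq_inter, ← map_inf, hxy,
          map_bot]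
        rfl
      rw [map_sup, Finset.sup_eq_union, Finset.sum_union hdisj]
    · dsimp only
      rw [map_top, Finset.top_eq_univ]
      exact Rtot hg hh hgh
    · intro x hx
      dsimp only
      have hclosed : ∀ (G : Set B), ∀ x ∈ subalgClosure G, ∀ y ∈ subalgClosure G,
          x ⊔ y ∈ subalgClosure G := fun G x hx y hy => sup_mem_closure hx hy
      rcases hx with ((hx | hx) | hx) | hx
      · have hfx : g x = f x := hgf x (Or.inl hx)
        obtain ⟨P, rfl⟩ := pair_rep (A 0) (A 2) hx
        have hgsum : g (P.sup (blk (A 0) (A 2))) = ∑ q ∈ P, g (blk (A 0) (A 2) q) :=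
          meas_sup_sum hg bot_mem_closure (hclosed _) _ (blk_disj _ _) P
            (fun q _ => inf_mem_closure (lit_mem_closure memA0_012 _)
              (lit_mem_closure memA2_012 _))
        have hφsup : φ (P.sup (blk (A 0) (A 2)))
            = P.sup (fun q => clit 0 q.1 ⊓ clit 2 q.2) := by
          rw [map_finset_sup]
          exact Finset.sup_congr rfl fun q _ => by
            show φ (lit (A 0) q.1 ⊓ lit (A 2) q.2) = _
            rw [map_inf, hlit, hlit]
        rw [hφsup, nu_finsum _ _ (by decide) P, ← hfx, hgsum]
        exact Finset.sum_congr rfl fun q _ => nu_blk02 hg hh hgh q.1 q.2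
      · have hfx : g x = f x := hgf x (Or.inr hx)
        obtain ⟨P, rfl⟩ := pair_rep (A 1) (A 2) hx
        have hgsum : g (P.sup (blk (A 1) (A 2))) = ∑ q ∈ P, g (blk (A 1) (A 2) q) :=
          meas_sup_sum hg bot_mem_closure (hclosed _) _ (blk_disj _ _) P
            (fun q _ => inf_mem_closure (lit_mem_closure memA1_012 _)
              (lit_mem_closure memA2_012 _))
        have hφsup : φ (P.sup (blk (A 1) (A 2)))
            = P.sup (fun q => clit 1 q.1 ⊓ clit 2 q.2) := by
          rw [map_finset_sup]
          exact Finset.sup_congr rfl fun q _ => by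
            show φ (lit (A 1) q.1 ⊓ lit (A 2) q.2) = _
            rw [map_inf, hlit, hlit]
        rw [hφsup, nu_finsum _ _ (by decide) P, ← hfx, hgsum]
        exact Finset.sum_congr rfl fun q _ => nu_blk12 hg hh hgh q.1 q.2
      · have hfx : h x = f x := hhf x (Or.inl hx)
        obtain ⟨P, rfl⟩ := pair_rep (A 0) (A 3) hx
        have hhsum : h (P.sup (blk (A 0) (A 3))) = ∑ q ∈ P, h (blk (A 0) (A 3) q) :=
          meas_sup_sum hh bot_mem_closure (hclosed _) _ (blk_disj _ _) P
            (fun q _ => inf_mem_closure (lit_mem_closure memA0_013 _)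
              (lit_mem_closure memA3_013 _))
        have hφsup : φ (P.sup (blk (A 0) (A 3)))
            = P.sup (fun q => clit 0 q.1 ⊓ clit 3 q.2) := by
          rw [map_finset_sup]
          exact Finset.sup_congr rfl fun q _ => by
            show φ (lit (A 0) q.1 ⊓ lit (A 3) q.2) = _
            rw [map_inf, hlit, hlit]
        rw [hφsup, nu_finsum _ _ (by decide) P, ← hfx, hhsum]
        exact Finset.sum_congr rfl fun q _ => nu_blk03 hg hh hgh q.1 q.2
      · have hfx : h x = f x := hhf x (Or.inr hx)
        obtain ⟨P, rfl⟩ := pair_rep (A 1) (A 3) hx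
        have hhsum : h (P.sup (blk (A 1) (A 3))) = ∑ q ∈ P, h (blk (A 1) (A 3) q) :=
          meas_sup_sum hh bot_mem_closure (hclosed _) _ (blk_disj _ _) P
            (fun q _ => inf_mem_closure (lit_mem_closure memA1_013 _)
              (lit_mem_closure memA3_013 _))
        have hφsup : φ (P.sup (blk (A 1) (A 3)))
            = P.sup (fun q => clit 1 q.1 ⊓ clit 3 q.2) := by
          rw [map_finset_sup]
          exact Finset.sup_congr rfl fun q _ => by
            show φ (lit (A 1) q.1 ⊓ lit (A 3) q.2) = _
            rw [map_inf, hlit, hlit]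
        rw [hφsup, nu_finsum _ _ (by decide) P, ← hfx, hhsum]
        exact Finset.sum_congr rfl fun q _ => nu_blk13 hg hh hgh q.1 q.2
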